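/- Let g = (1 2 ⋯ n) ∈ S_n, let H = ⟨g⟩, let ζ ∈ ℂ be a primitive n-th root of unity, and define ψ : S_n → ℂ by ψ(g^i) = ζ^i for 0 ≤ i < n and ψ(σ) = 0 for σ ∉ H. Define χ : S_n → ℂ by χ(τ) = (1/n) · Σ_{σ ∈ S_n} ψ(σ⁻¹τσ) (the character of the representation of S_n induced from the linear representation ψ of H). Then for every τ ∈ S_n: if τ has cycle type (d^k) (i.e. exactly k cycles, each of length d, with dk = n) then χ(τ) = (k−1)!·d^{k−1}·μ(d), and if the cycle type of τ is not of the form (d^k) then χ(τ) = 0. -/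

import Mathlib

section Helpers

open Equiv Equiv.Perm Finset Function

theorem Equiv.pow_addRight {A : Type*} [AddCommGroup A] (a : A) (n : ℕ) :
    (Equiv.addRight a : Perm A) ^ n = Equiv.addRight (n • a) := by
  induction n with
  | zero => ext x; simp
  | succ n ih =>
    ext x
    rw [pow_succ, Perm.mul_apply, ih]
    simp only [Equiv.coe_addRight, succ_nsmul]
    abel

theorem Equiv.zpow_addRight {A : Type*} [AddCommGroup A] (a : A) (j : ℤ) :
    (Equiv.addRight a : Perm A) ^ j = Equiv.addRight (j • a) := by
  cases j with
  | ofNat n =>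
    simp only [Int.ofNat_eq_natCast, zpow_natCast, natCast_zsmul]
    exact Equiv.pow_addRight a n
  | negSucc n =>
    rw [zpow_negSucc, Equiv.pow_addRight, negSucc_zsmul]
    ext x
    simp [sub_eq_add_neg]

lemma sameCycle_addRight {A : Type*} [AddCommGroup A] (a : A) (x y : A) :
    (Equiv.addRight a : Equiv.Perm A).SameCycle x y ↔ ∃ j : ℤ, x + j • a = y := by
  constructor
  · rintro ⟨j, hj⟩
    exact ⟨j, by simpa [Equiv.zpow_addRight] using hj⟩
  · rintro ⟨j, hj⟩
    exact ⟨j, by simpa [Equiv.zpow_addRight] using hj⟩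

lemma support_addRight {A : Type*} [AddCommGroup A] [Fintype A] [DecidableEq A]
    {a : A} (ha : a ≠ 0) :
    (Equiv.addRight a : Perm A).support = Finset.univ := by
  ext x
  simp [Equiv.Perm.mem_support, ha]

lemma card_support_cycleOf_addRight {A : Type*} [AddCommGroup A] [Fintype A] [DecidableEq A]
    {a : A} (ha : a ≠ 0) (x : A) :
    ((Equiv.addRight a : Perm A).cycleOf x).support.card = addOrderOf a := by
  have hx : x ∈ (Equiv.addRight a : Perm A).support := by
    simp [Equiv.Perm.mem_support, ha]
  have hset : ((Equiv.addRight a : Perm A).cycleOf x).support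
      = Finset.image (fun h : AddSubgroup.zmultiples a => x + (h : A)) Finset.univ := by
    ext y
    simp only [Equiv.Perm.mem_support_cycleOf_iff, Finset.mem_image, Finset.mem_univ, true_and]
    constructor
    · rintro ⟨hs, -⟩
      obtain ⟨j, hj⟩ := (sameCycle_addRight a x y).1 hs
      exact ⟨⟨j • a, AddSubgroup.mem_zmultiples_iff.2 ⟨j, rfl⟩⟩, hj⟩
    · rintro ⟨⟨h, hh⟩, rfl⟩
      obtain ⟨j, rfl⟩ := AddSubgroup.mem_zmultiples_iff.1 hh
      exact ⟨(sameCycle_addRight a x _).2 ⟨j, rfl⟩, hx⟩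
  rw [hset, Finset.card_image_of_injective _ (fun h h' hh => Subtype.ext (by
    simpa using hh)), Finset.card_univ, ← Nat.card_eq_fintype_card, Nat.card_zmultiples]

lemma cycleType_eq_replicate_of_forall {α : Type*} [Fintype α] [DecidableEq α]
    {σ : Perm α} {d : ℕ}
    (h : ∀ x ∈ σ.support, (σ.cycleOf x).support.card = d) :
    σ.cycleType = Multiset.replicate (σ.support.card / d) d := by
  have hmem : ∀ b ∈ σ.cycleType, b = d := by
    intro b hb
    rw [Equiv.Perm.cycleType_def, Multiset.mem_map] at hb
    obtain ⟨f, hf, rfl⟩ := hb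
    have hf' : f ∈ σ.cycleFactorsFinset := hf
    obtain ⟨hc, hfa⟩ := (Equiv.Perm.mem_cycleFactorsFinset_iff).1 hf'
    obtain ⟨x, hxf⟩ := hc.nonempty_support
    have hxσ : x ∈ σ.support := by
      have h1 : f x ≠ x := Equiv.Perm.mem_support.1 hxf
      rw [Equiv.Perm.mem_support, ← hfa x hxf]
      exact h1
    have := Equiv.Perm.cycle_is_cycleOf hxf hf'
    simp only [Function.comp_apply]
    rw [this]
    exact h x hxσ
  have hrep : σ.cycleType = Multiset.replicate (Multiset.card σ.cycleType) d :=
    Multiset.eq_replicate_card.2 hmem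
  have hsum : σ.support.card = Multiset.card σ.cycleType * d := by
    conv_lhs => rw [← Equiv.Perm.sum_cycleType σ]
    rw [hrep]; simp [Multiset.sum_replicate, mul_comm]
  rcases Nat.eq_zero_or_pos d with hd | hd
  · subst hd
    have : σ.cycleType = 0 := by
      by_contra hne
      obtain ⟨b, hb⟩ := Multiset.exists_mem_of_ne_zero hne
      have h2 := Equiv.Perm.two_le_of_mem_cycleType hb
      have h0 := hmem b hb
      omega
    simp [this, hsum, Multiset.eq_zero_iff_forall_notMem]
  · rw [hrep, hsum, Nat.mul_div_cancel _ hd]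

lemma cycleType_addRight {A : Type*} [AddCommGroup A] [Fintype A] [DecidableEq A]
    {a : A} (ha : a ≠ 0) :
    (Equiv.addRight a : Perm A).cycleType =
      Multiset.replicate (Fintype.card A / addOrderOf a) (addOrderOf a) := by
  have := cycleType_eq_replicate_of_forall
    (σ := (Equiv.addRight a : Perm A)) (d := addOrderOf a)
    (fun x _ => card_support_cycleOf_addRight ha x)
  rwa [support_addRight ha, Finset.card_univ] at this

lemma orderOf_addRight {A : Type*} [AddCommGroup A] [Fintype A] (a : A) :
    orderOf (Equiv.addRight a : Perm A) = addOrderOf a := by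
  have h : ∀ j : ℕ, (Equiv.addRight a : Perm A) ^ j = 1 ↔ j • a = 0 := by
    intro j
    rw [Equiv.pow_addRight]
    constructor
    · intro h
      have := congrArg (fun e : Perm A => e 0) h
      simpa using this
    · intro h
      rw [h]
      exact Equiv.addRight_zero
  apply Nat.dvd_antisymm
  · rw [orderOf_dvd_iff_pow_eq_one, h, ← addOrderOf_dvd_iff_nsmul_eq_zero]
  · rw [addOrderOf_dvd_iff_nsmul_eq_zero, ← h, pow_orderOf_eq_one]

lemma sum_divisors_moebius_indicator (m : ℕ) :
    ∑ e ∈ m.divisors, (ArithmeticFunction.moebius e : ℤ) = if m = 1 then 1 else 0 := by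
  have h : (ArithmeticFunction.moebius * ArithmeticFunction.zeta : ArithmeticFunction ℤ) m
      = (1 : ArithmeticFunction ℤ) m := by
    rw [ArithmeticFunction.moebius_mul_coe_zeta]
  rwa [ArithmeticFunction.coe_mul_zeta_apply, ArithmeticFunction.one_apply] at h

lemma sum_primitive_roots_eq_moebius {d : ℕ} (hd : 0 < d) {ξ : ℂ}
    (hξ : IsPrimitiveRoot ξ d) :
    ∑ j ∈ (Finset.range d).filter (fun j => Nat.gcd d j = 1), ξ ^ j
      = ((ArithmeticFunction.moebius d : ℤ) : ℂ) := by
  classical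
  have step1 : ∑ j ∈ (Finset.range d).filter (fun j => Nat.gcd d j = 1), ξ ^ j
      = ∑ j ∈ Finset.range d, (if Nat.gcd d j = 1 then (1:ℂ) else 0) * ξ ^ j := by
    rw [Finset.sum_filter]
    refine Finset.sum_congr rfl fun j _ => ?_
    by_cases h : Nat.gcd d j = 1 <;> simp [h]
  have ind : ∀ j : ℕ, (if Nat.gcd d j = 1 then (1:ℂ) else 0)
      = ∑ e ∈ (Nat.gcd d j).divisors, ((ArithmeticFunction.moebius e : ℤ) : ℂ) := by
    intro j
    have h1 := congrArg (fun z : ℤ => (z : ℂ)) (sum_divisors_moebius_indicator (Nat.gcd d j))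
    push_cast at h1
    exact h1.symm
  have divgcd : ∀ j : ℕ, (Nat.gcd d j).divisors = d.divisors.filter (fun e => e ∣ j) := by
    intro j
    ext e
    simp only [Nat.mem_divisors, Finset.mem_filter, Nat.dvd_gcd_iff]
    constructor
    · rintro ⟨⟨h1, h2⟩, -⟩; exact ⟨⟨h1, hd.ne'⟩, h2⟩
    · rintro ⟨⟨h1, -⟩, h2⟩
      exact ⟨⟨h1, h2⟩, Nat.gcd_ne_zero_left hd.ne'⟩
  have step2 : ∑ j ∈ (Finset.range d).filter (fun j => Nat.gcd d j = 1), ξ ^ j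
      = ∑ e ∈ d.divisors, ((ArithmeticFunction.moebius e : ℤ) : ℂ)
          * ∑ j ∈ (Finset.range d).filter (fun j => e ∣ j), ξ ^ j := by
    rw [step1]
    simp_rw [fun j => ind j, divgcd, Finset.sum_filter, Finset.sum_mul, Finset.mul_sum]
    rw [Finset.sum_comm]
    refine Finset.sum_congr rfl fun j _ => ?_
    refine Finset.sum_congr rfl fun e _ => ?_
    by_cases h : e ∣ j <;> simp [h]
  rw [step2]
  have inner : ∀ e ∈ d.divisors,
      ∑ j ∈ (Finset.range d).filter (fun j => e ∣ j), ξ ^ j = if e = d then 1 else 0 := by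
    intro e he
    obtain ⟨⟨c, hc⟩, -⟩ := Nat.mem_divisors.1 he
    have he0 : 0 < e := Nat.pos_of_dvd_of_pos (Nat.mem_divisors.1 he).1 hd
    have hdc : d / e = c := by rw [hc, Nat.mul_div_cancel_left _ he0]
    have himg : (Finset.range d).filter (fun j => e ∣ j)
        = Finset.image (fun m => e * m) (Finset.range (d / e)) := by
      ext j
      simp only [Finset.mem_filter, Finset.mem_range, Finset.mem_image]
      constructor
      · rintro ⟨hj, m, rfl⟩
        refine ⟨m, ?_, rfl⟩
        rw [hdc]
        exact (Nat.mul_lt_mul_left he0).1 (by omega)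
      · rintro ⟨m, hm, rfl⟩
        refine ⟨?_, ⟨m, rfl⟩⟩
        rw [hdc] at hm
        calc e * m < e * c := (Nat.mul_lt_mul_left he0).2 hm
          _ = d := hc.symm
    rw [himg, Finset.sum_image (fun x _ y _ h => Nat.eq_of_mul_eq_mul_left he0 h)]
    simp_rw [pow_mul]
    by_cases hed : e = d
    · subst hed
      rw [Nat.div_self he0]
      simp
    · have hne : ξ ^ e ≠ 1 := fun h =>
        hed (Nat.dvd_antisymm ⟨c, hc⟩ ((hξ.pow_eq_one_iff_dvd e).1 h))
      have hpow : (ξ ^ e) ^ (d / e) = 1 := by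
        rw [← pow_mul, Nat.mul_div_cancel' ⟨c, hc⟩, hξ.pow_eq_one]
      rw [if_neg hed, geom_sum_eq hne, hpow]
      simp
  rw [Finset.sum_congr rfl fun e he => by rw [inner e he]]
  simp [mul_ite, Finset.sum_ite_eq' d.divisors d, Nat.mem_divisors_self d hd.ne']

lemma ramanujan_full {n k : ℕ} (hn : 0 < n) (hkd : k ∣ n) (hk0 : 0 < k) {ζ : ℂ}
    (hζ : IsPrimitiveRoot ζ n) :
    ∑ i ∈ (Finset.range n).filter (fun i => Nat.gcd n i = k), ζ ^ i
      = ((ArithmeticFunction.moebius (n / k) : ℤ) : ℂ) := by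
  obtain ⟨d, hd⟩ := hkd
  have hd0 : 0 < d := by
    rcases Nat.eq_zero_or_pos d with h | h
    · subst h; omega
    · exact h
  have hξ : IsPrimitiveRoot (ζ ^ k) d := hζ.pow hn hd
  have himg : (Finset.range n).filter (fun i => Nat.gcd n i = k)
      = Finset.image (fun j => k * j) ((Finset.range d).filter (fun j => Nat.gcd d j = 1)) := by
    ext i
    simp only [Finset.mem_filter, Finset.mem_range, Finset.mem_image]
    constructor
    · rintro ⟨hi, hg⟩
      have hki : k ∣ i := hg ▸ Nat.gcd_dvd_right n i
      obtain ⟨j, rfl⟩ := hki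
      refine ⟨j, ⟨?_, ?_⟩, rfl⟩
      · rw [hd] at hi; exact (Nat.mul_lt_mul_left hk0).1 hi
      · have h2 : Nat.gcd (k * d) (k * j) = k * Nat.gcd d j := Nat.gcd_mul_left k d j
        rw [← hd, hg] at h2
        exact (Nat.eq_of_mul_eq_mul_left hk0 (by omega)).symm
    · rintro ⟨j, ⟨hj, hgj⟩, rfl⟩
      refine ⟨?_, ?_⟩
      · rw [hd]; exact (Nat.mul_lt_mul_left hk0).2 hj
      · rw [hd, Nat.gcd_mul_left, hgj, mul_one]
  rw [himg, Finset.sum_image (fun x _ y _ h => Nat.eq_of_mul_eq_mul_left hk0 h)]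
  have hnk : n / k = d := by rw [hd, Nat.mul_div_cancel_left _ hk0]
  rw [hnk]
  simp_rw [pow_mul]
  exact sum_primitive_roots_eq_moebius hd0 hξ

lemma card_centralizer_addRight {A : Type*} [AddCommGroup A] [Fintype A] [DecidableEq A] (a : A) :
    (Finset.univ.filter fun u : Perm A => u * Equiv.addRight a = Equiv.addRight a * u).card
      = addOrderOf a ^ (Fintype.card A / addOrderOf a)
        * Nat.factorial (Fintype.card A / addOrderOf a) := by
  classical
  set H := AddSubgroup.zmultiples a with hHdef
  set Q := A ⧸ H with hQdef
  letI : Fintype Q := Fintype.ofFinite Q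
  letI : Fintype H := Fintype.ofFinite H
  set q : A → Q := QuotientAddGroup.mk with hqdef
  set rep : Q → A := Quotient.out with hrepdef
  have hqrep : ∀ z : Q, q (rep z) = z := fun z => QuotientAddGroup.out_eq' z
  have hq_add : ∀ x y : A, q (x + y) = q x + q y := fun x y => rfl
  have hq_zero : ∀ x : A, x ∈ H → q x = 0 := fun x hx => (QuotientAddGroup.eq_zero_iff x).2 hx
  have hqeq : ∀ x y : A, q x = q y ↔ x - y ∈ H := by
    intro x y
    rw [hqdef]
    rw [QuotientAddGroup.eq]
    rw [show x - y = -(-x + y) by abel, neg_mem_iff]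
  have hmemrep : ∀ x : A, x - rep (q x) ∈ H :=
    fun x => (hqeq x (rep (q x))).1 (hqrep (q x)).symm
  have hrepq : ∀ x : A, rep (q x) + (x - rep (q x)) = x := fun x => by abel
  have hstep : ∀ u : Perm A, u * Equiv.addRight a = Equiv.addRight a * u →
      ∀ (x h : A), h ∈ H → u (x + h) = u x + h := by
    intro u hu x h hh
    obtain ⟨j, rfl⟩ := AddSubgroup.mem_zmultiples_iff.1 hh
    have hc : Commute u (Equiv.addRight a) := hu
    have h2 := hc.zpow_right j
    rw [Equiv.zpow_addRight] at h2
    have h3 := congrArg (fun (p : Perm A) => p x) h2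
    simpa [Equiv.Perm.mul_apply] using h3
  have hdesc : ∀ u : Perm A, u * Equiv.addRight a = Equiv.addRight a * u →
      ∀ x y : A, q x = q y → q (u x) = q (u y) := by
    intro u hu x y hxy
    have h1 : x - y ∈ H := (hqeq x y).1 hxy
    have h2 : u x = u y + (x - y) := by
      rw [← hstep u hu y _ h1]
      congr 1
      abel
    rw [h2, hq_add, hq_zero _ h1, add_zero]
  set P : Perm A → Prop := fun u => u * Equiv.addRight a = Equiv.addRight a * u with hPdef
  set π0 : Perm A → Q → Q := fun u z => q (u (rep z)) with hπ0def
  have hπq : ∀ u : Perm A, P u → ∀ x : A, q (u x) = π0 u (q x) := by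
    intro u hu x
    exact hdesc u hu x (rep (q x)) (hqrep (q x)).symm
  have hπinj : ∀ u : Perm A, P u → Injective (π0 u) := by
    intro u hu z z' h
    have h1 : u (rep z) - u (rep z') ∈ H := (hqeq _ _).1 h
    have h2 : u (rep z' + (u (rep z) - u (rep z'))) = u (rep z) := by
      rw [hstep u hu _ _ h1]
      abel
    have h3 : rep z' + (u (rep z) - u (rep z')) = rep z := u.injective h2
    have h4 : q (rep z) = q (rep z') := by
      rw [hqeq]
      rw [← h3]
      simpa using h1
    rw [hqrep, hqrep] at h4
    exact h4.symm ▸ rfl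
  set E : {u : Perm A // P u} → (Perm Q) × (Q → H) := fun u =>
    ⟨Equiv.ofBijective (π0 u.1) (Finite.injective_iff_bijective.1 (hπinj u.1 u.2)),
      fun z => ⟨u.1 (rep z) - rep (π0 u.1 z), hmemrep (u.1 (rep z))⟩⟩ with hEdef
  have einj : Injective E := by
    intro u v h
    rw [Prod.ext_iff] at h
    obtain ⟨h1, h2⟩ := h
    have hπeq : ∀ z, π0 u.1 z = π0 v.1 z := by
      intro z
      have := congrArg (fun e : Perm Q => e z) h1
      simpa [hEdef, Equiv.ofBijective] using this
    have hveq : ∀ z, u.1 (rep z) = v.1 (rep z) := by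
      intro z
      have := congrArg (fun f : Q → H => (f z : A)) h2
      simp only [hEdef] at this
      have h3 : u.1 (rep z) - rep (π0 u.1 z) = v.1 (rep z) - rep (π0 v.1 z) := this
      rw [hπeq z] at h3
      exact sub_left_injective h3
    apply Subtype.ext
    apply Equiv.ext
    intro x
    have hx1 : u.1 x = u.1 (rep (q x)) + (x - rep (q x)) := by
      rw [← hstep u.1 u.2 _ _ (hmemrep x), hrepq x]
    have hx2 : v.1 x = v.1 (rep (q x)) + (x - rep (q x)) := by
      rw [← hstep v.1 v.2 _ _ (hmemrep x), hrepq x]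
    rw [hx1, hx2, hveq (q x)]
  have esurj : Surjective E := by
    rintro ⟨π, f⟩
    set t : A → A := fun x => rep (π (q x)) + ((f (q x) : A) + (x - rep (q x))) with htdef
    have hqt : ∀ x, q (t x) = π (q x) := by
      intro x
      rw [htdef]
      simp only
      rw [hq_add, hq_add, hqrep, hq_zero _ (f (q x)).2, hq_zero _ (hmemrep x), add_zero, add_zero]
    have tinj : Injective t := by
      intro x x' hxx
      have hq1 : π (q x) = π (q x') := by rw [← hqt, ← hqt, hxx]
      have hq2 : q x = q x' := π.injective hq1
      rw [htdef] at hxx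
      simp only [hq2] at hxx
      have h5 : x - rep (q x') = x' - rep (q x') := add_left_cancel (add_left_cancel hxx)
      exact sub_left_injective h5
    set u : Perm A := Equiv.ofBijective t (Finite.injective_iff_bijective.1 tinj) with hudef
    have hut : ∀ x, u x = t x := fun x => rfl
    have hu : P u := by
      rw [hPdef]
      apply Equiv.ext
      intro x
      have hqa : q (x + a) = q x := by
        rw [hq_add, hq_zero a (AddSubgroup.mem_zmultiples a), add_zero]
      simp only [Equiv.Perm.mul_apply]
      rw [Equiv.coe_addRight, hut, hut, htdef]
      simp only [hqa]
      abel
    refine ⟨⟨u, hu⟩, ?_⟩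
    have hπ0u : ∀ z, π0 u z = π z := by
      intro z
      rw [hπ0def]
      simp only
      rw [hut, hqt, hqrep]
    rw [hEdef]
    refine Prod.ext ?_ ?_
    · apply Equiv.ext
      intro z
      simp only [Equiv.ofBijective]
      exact hπ0u z
    · funext z
      apply Subtype.ext
      simp only
      rw [hπ0u z, hut, htdef]
      simp only [hqrep]
      abel
  have hbij : Bijective E := ⟨einj, esurj⟩
  have hcard1 : (Finset.univ.filter fun u : Perm A =>
        u * Equiv.addRight a = Equiv.addRight a * u).card
      = Fintype.card {u : Perm A // P u} := (Fintype.card_subtype P).symm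
  have hcard2 : Fintype.card {u : Perm A // P u} = Fintype.card ((Perm Q) × (Q → H)) :=
    Fintype.card_of_bijective hbij
  have hcardH : Fintype.card H = addOrderOf a := by
    rw [← Nat.card_eq_fintype_card, Nat.card_zmultiples]
  have hd0 : 0 < addOrderOf a := addOrderOf_pos a
  have hcardQ : Fintype.card Q = Fintype.card A / addOrderOf a := by
    have hl := AddSubgroup.card_eq_card_quotient_mul_card_addSubgroup H
    rw [Nat.card_eq_fintype_card, Nat.card_eq_fintype_card, Nat.card_eq_fintype_card, hcardH] at hl
    rw [hl, Nat.mul_div_cancel _ hd0]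
  rw [hcard1, hcard2, Fintype.card_prod, Fintype.card_perm, Fintype.card_fun, hcardH, hcardQ,
    Nat.mul_comm]

end Helpers

/-- The full cycle type of a permutation of `Fin n`: the multiset of its cycle lengths,
including fixed points as cycles of length `1`. -/
def fullCycleType {n : ℕ} (τ : Equiv.Perm (Fin n)) : Multiset ℕ :=
  τ.cycleType + Multiset.replicate (n - τ.support.card) 1

open Equiv Equiv.Perm Finset Function Fin.NatCast in
/-- Let `g = (1 2 ⋯ n)`, `H = ⟨g⟩`, `ζ` a primitive `n`-th root of unity, and `ψ` the class
function with `ψ(gⁱ) = ζⁱ` for `0 ≤ i < n` and `ψ(σ) = 0` for `σ ∉ H`. Let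
`χ(τ) = (1/n)·∑_{σ ∈ S_n} ψ(σ⁻¹τσ)` be the induced character. Then `χ(τ) = (k-1)!·d^{k-1}·μ(d)`
if `τ` has cycle type `(d^k)` (with `d·k = n`), and `χ(τ) = 0` if the cycle type of `τ` is not
of this form. -/
theorem induced_character_values (n : ℕ) (hn : 0 < n) (ζ : ℂ) (hζ : IsPrimitiveRoot ζ n)
    (ψ χ : Equiv.Perm (Fin n) → ℂ)
    (hψ₁ : ∀ i : ℕ, i < n → ψ (finRotate n ^ i) = ζ ^ i)
    (hψ₂ : ∀ σ : Equiv.Perm (Fin n), σ ∉ Subgroup.zpowers (finRotate n) → ψ σ = 0)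
    (hχ : ∀ τ : Equiv.Perm (Fin n),
      χ τ = (1 / (n : ℂ)) * ∑ σ : Equiv.Perm (Fin n), ψ (σ⁻¹ * τ * σ)) :
    ∀ τ : Equiv.Perm (Fin n),
      (∀ d k : ℕ, d * k = n → fullCycleType τ = Multiset.replicate k d →
        χ τ = ((k - 1).factorial : ℂ) * (d : ℂ) ^ (k - 1) *
          ((ArithmeticFunction.moebius d : ℤ) : ℂ)) ∧
      ((¬ ∃ d k : ℕ, fullCycleType τ = Multiset.replicate k d) → χ τ = 0) := by
  classical
  obtain ⟨m, rfl⟩ : ∃ m, n = m + 1 := ⟨n - 1, by omega⟩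
  intro τ
  set g : Perm (Fin (m+1)) := finRotate (m+1) with hgdef
  have hg : g = Equiv.addRight (1 : Fin (m+1)) := by
    apply Equiv.ext
    intro x
    simp [hgdef, finRotate_succ_apply]
  have hsmul : ∀ i : ℕ, i • (1 : Fin (m+1)) = (i : Fin (m+1)) := fun i => by
    open Fin.CommRing in rw [nsmul_eq_mul, mul_one]
  have hgpow : ∀ i : ℕ, g ^ i = Equiv.addRight ((i : ℕ) • (1 : Fin (m+1))) := fun i => by
    rw [hg, Equiv.pow_addRight]
  have hcardA : Fintype.card (Fin (m+1)) = m + 1 := Fintype.card_fin _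
  have hord1 : addOrderOf (1 : Fin (m+1)) = m + 1 := by
    rw [addOrderOf_eq_iff (Nat.succ_pos m)]
    constructor
    · rw [hsmul]
      exact Fin.natCast_self (m+1)
    · intro j hjm hj0 h
      rw [hsmul, Fin.natCast_eq_zero] at h
      have := Nat.le_of_dvd hj0 h
      omega
  have hordi : ∀ i : ℕ, addOrderOf (i • (1 : Fin (m+1))) = (m+1) / Nat.gcd (m+1) i := by
    intro i
    rcases Nat.eq_zero_or_pos i with rfl | hi
    · simp [Nat.gcd_zero_right, Nat.div_self (Nat.succ_pos m)]
    · rw [addOrderOf_nsmul' _ hi.ne', hord1]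
  have horder : orderOf g = m + 1 := by rw [hg, orderOf_addRight, hord1]
  have hfullpow : ∀ i : ℕ, fullCycleType (g ^ i)
      = Multiset.replicate (Nat.gcd (m+1) i) ((m+1) / Nat.gcd (m+1) i) := by
    intro i
    by_cases hz : (i • (1 : Fin (m+1))) = 0
    · have hdvd : (m+1) ∣ i := by
        rw [hsmul] at hz
        exact Fin.natCast_eq_zero.1 hz
      have hgcd : Nat.gcd (m+1) i = m+1 := Nat.gcd_eq_left hdvd
      have hone : g ^ i = 1 := by rw [hgpow, hz, Equiv.addRight_zero]
      rw [hone, hgcd, Nat.div_self (Nat.succ_pos m)]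
      simp [fullCycleType, Equiv.Perm.cycleType_one, Equiv.Perm.support_one]
    · have hct : (g ^ i).cycleType
          = Multiset.replicate (Fintype.card (Fin (m+1)) / addOrderOf (i • (1 : Fin (m+1))))
            (addOrderOf (i • (1 : Fin (m+1)))) := by
        rw [hgpow]
        exact cycleType_addRight hz
      have hsupp : (g ^ i).support = Finset.univ := by
        rw [hgpow]
        exact support_addRight hz
      have hgcd_dvd : Nat.gcd (m+1) i ∣ (m+1) := Nat.gcd_dvd_left _ _
      have hk : Fintype.card (Fin (m+1)) / addOrderOf (i • (1 : Fin (m+1))) = Nat.gcd (m+1) i := by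
        rw [hcardA, hordi i, Nat.div_div_self hgcd_dvd (Nat.succ_ne_zero m)]
      rw [fullCycleType, hct, hk, hordi i, hsupp, Finset.card_univ, hcardA, Nat.sub_self,
        Multiset.replicate_zero, add_zero]
  have hconjfull : ∀ (σ ρ : Perm (Fin (m+1))), fullCycleType (σ⁻¹ * ρ * σ) = fullCycleType ρ := by
    intro σ ρ
    have hct : (σ⁻¹ * ρ * σ).cycleType = ρ.cycleType := by
      have := Equiv.Perm.cycleType_conj (σ := ρ) (τ := σ⁻¹)
      simpa using this
    have hsc : (σ⁻¹ * ρ * σ).support.card = ρ.support.card := by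
      rw [← Equiv.Perm.sum_cycleType, ← Equiv.Perm.sum_cycleType, hct]
    rw [fullCycleType, fullCycleType, hct, hsc]
  have hfull_inj : ∀ (σ ρ : Perm (Fin (m+1))),
      fullCycleType σ = fullCycleType ρ → σ.cycleType = ρ.cycleType := by
    intro σ ρ h
    have key : ∀ π : Perm (Fin (m+1)),
        π.cycleType = (fullCycleType π).filter (fun x => 2 ≤ x) := by
      intro π
      rw [fullCycleType, Multiset.filter_add,
        Multiset.filter_eq_self.2 (fun b hb => Equiv.Perm.two_le_of_mem_cycleType hb),
        Multiset.filter_eq_nil.2 (fun b hb => by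
          rw [Multiset.eq_of_mem_replicate hb]
          omega), add_zero]
    rw [key σ, key ρ, h]
  have hconj_exists : ∀ (ρ : Perm (Fin (m+1))), fullCycleType τ = fullCycleType ρ →
      ∃ σ : Perm (Fin (m+1)), σ⁻¹ * τ * σ = ρ := by
    intro ρ h
    have hconj : IsConj τ ρ := Equiv.Perm.isConj_of_cycleType_eq (hfull_inj τ ρ h)
    obtain ⟨c, hc⟩ := isConj_iff.1 hconj
    exact ⟨c⁻¹, by rw [← hc]; group⟩
  constructor
  · -- part 1
    intro d k hdk hfull
    have hk0 : 0 < k := by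
      rcases Nat.eq_zero_or_pos k with rfl | h
      · simp at hdk
      · exact h
    have hd0 : 0 < d := by
      rcases Nat.eq_zero_or_pos d with rfl | h
      · simp at hdk
      · exact h
    have hkdvd : k ∣ m + 1 := ⟨d, by rw [← hdk]; ring⟩
    have hdk' : (m+1) / k = d := by rw [← hdk, Nat.mul_div_cancel _ hk0]
    have hper : ∀ σ : Perm (Fin (m+1)), ψ (σ⁻¹ * τ * σ)
        = ∑ i ∈ Finset.range (m+1), (if σ⁻¹ * τ * σ = g ^ i then ζ ^ i else 0) := by
      intro σ
      by_cases hmem : σ⁻¹ * τ * σ ∈ Subgroup.zpowers g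
      · rw [mem_zpowers_iff_mem_range_orderOf] at hmem
        obtain ⟨i, hi, hgi⟩ := Finset.mem_image.1 hmem
        rw [horder, Finset.mem_range] at hi
        rw [← hgi, hψ₁ i hi]
        rw [Finset.sum_eq_single i]
        · simp
        · intro j hj hne
          rw [if_neg]
          intro heq
          refine hne (pow_injOn_Iio_orderOf ?_ ?_ heq.symm)
          · rw [horder]
            exact Set.mem_Iio.2 (Finset.mem_range.1 hj)
          · rw [horder]
            exact Set.mem_Iio.2 hi
        · intro h
          exact absurd (Finset.mem_range.2 hi) h
      · rw [hψ₂ _ hmem]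
        symm
        apply Finset.sum_eq_zero
        intro i _
        rw [if_neg]
        intro heq
        exact hmem (heq ▸ pow_mem (Subgroup.mem_zpowers g) i)
    rw [hχ τ, Finset.sum_congr rfl fun σ _ => hper σ, Finset.sum_comm]
    have hfiber : ∀ i ∈ Finset.range (m+1),
        (∑ σ : Perm (Fin (m+1)), if σ⁻¹ * τ * σ = g ^ i then ζ ^ i else (0:ℂ))
        = (if Nat.gcd (m+1) i = k
            then ((d ^ k * Nat.factorial k : ℕ) : ℂ) * ζ ^ i else 0) := by
      intro i _
      have hsum : (∑ σ : Perm (Fin (m+1)), if σ⁻¹ * τ * σ = g ^ i then ζ ^ i else (0:ℂ))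
          = ((Finset.univ.filter fun σ : Perm (Fin (m+1)) =>
              σ⁻¹ * τ * σ = g ^ i).card : ℂ) * ζ ^ i := by
        rw [← Finset.sum_filter, Finset.sum_const, nsmul_eq_mul]
      rw [hsum]
      by_cases hgcd : Nat.gcd (m+1) i = k
      · rw [if_pos hgcd]
        have hfty : fullCycleType (g ^ i) = Multiset.replicate k d := by
          rw [hfullpow i, hgcd, hdk']
        obtain ⟨σ₀, hσ₀⟩ := hconj_exists (g ^ i) (by rw [hfty, hfull])
        have himg : (Finset.univ.filter fun σ : Perm (Fin (m+1)) => σ⁻¹ * τ * σ = g ^ i)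
            = Finset.image (fun u => σ₀ * u)
              (Finset.univ.filter fun u : Perm (Fin (m+1)) =>
                u * Equiv.addRight (i • (1 : Fin (m+1)))
                  = Equiv.addRight (i • (1 : Fin (m+1))) * u) := by
          ext σ
          simp only [Finset.mem_filter, Finset.mem_univ, true_and, Finset.mem_image, ← hgpow]
          constructor
          · intro hσ
            refine ⟨σ₀⁻¹ * σ, ?_, by group⟩
            have h1 : τ = σ * (g ^ i) * σ⁻¹ := by rw [← hσ]; group
            have h2 : τ = σ₀ * (g ^ i) * σ₀⁻¹ := by rw [← hσ₀]; group
            have h3 : σ * (g ^ i) * σ⁻¹ = σ₀ * (g ^ i) * σ₀⁻¹ := by rw [← h1, ← h2]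
            calc (σ₀⁻¹ * σ) * g ^ i = σ₀⁻¹ * (σ * (g ^ i) * σ⁻¹) * σ := by group
              _ = σ₀⁻¹ * (σ₀ * (g ^ i) * σ₀⁻¹) * σ := by rw [h3]
              _ = g ^ i * (σ₀⁻¹ * σ) := by group
          · rintro ⟨u, hu, rfl⟩
            calc (σ₀ * u)⁻¹ * τ * (σ₀ * u) = u⁻¹ * (σ₀⁻¹ * τ * σ₀) * u := by group
              _ = u⁻¹ * (g ^ i) * u := by rw [hσ₀]
              _ = u⁻¹ * (u * (g ^ i)) := by rw [mul_assoc, ← hu]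
              _ = g ^ i := by group
        rw [himg, Finset.card_image_of_injective _ (mul_right_injective σ₀),
          card_centralizer_addRight (i • (1 : Fin (m+1))), hcardA]
        have hdord : addOrderOf (i • (1 : Fin (m+1))) = d := by
          rw [hordi i, hgcd, hdk']
        rw [hdord]
        have hmk : (m+1) / d = k := by rw [← hdk, Nat.mul_div_cancel_left _ hd0]
        rw [hmk]
      · rw [if_neg hgcd]
        have hempty : (Finset.univ.filter fun σ : Perm (Fin (m+1)) => σ⁻¹ * τ * σ = g ^ i)
            = ∅ := by
          rw [Finset.filter_eq_empty_iff]
          intro σ _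
          intro hσ
          apply hgcd
          have h1 : fullCycleType τ
              = Multiset.replicate (Nat.gcd (m+1) i) ((m+1) / Nat.gcd (m+1) i) := by
            rw [← hconjfull σ τ, hσ, hfullpow i]
          rw [hfull] at h1
          have h2 := congrArg Multiset.card h1
          simpa [Multiset.card_replicate] using h2.symm
        rw [hempty]
        simp
    rw [Finset.sum_congr rfl hfiber]
    have hpull : ∑ i ∈ Finset.range (m+1),
        (if Nat.gcd (m+1) i = k then ((d ^ k * Nat.factorial k : ℕ) : ℂ) * ζ ^ i else 0)
        = ((d ^ k * Nat.factorial k : ℕ) : ℂ)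
          * ∑ i ∈ (Finset.range (m+1)).filter (fun i => Nat.gcd (m+1) i = k), ζ ^ i := by
      rw [Finset.mul_sum, ← Finset.sum_filter]
    rw [hpull, ramanujan_full (Nat.succ_pos m) hkdvd hk0 hζ, hdk']
    have hnat : d ^ k * Nat.factorial k = (m+1) * (Nat.factorial (k-1) * d ^ (k-1)) := by
      obtain ⟨k', rfl⟩ : ∃ k', k = k' + 1 := ⟨k - 1, by omega⟩
      simp only [Nat.add_sub_cancel, Nat.factorial_succ, pow_succ]
      rw [← hdk]
      ring
    rw [hnat]
    have hne : ((m+1 : ℕ) : ℂ) ≠ 0 := Nat.cast_ne_zero.2 (Nat.succ_ne_zero m)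
    push_cast
    push_cast at hne
    field_simp
  · -- part 2
    intro hne
    rw [hχ τ]
    have hz : ∀ σ : Perm (Fin (m+1)), ψ (σ⁻¹ * τ * σ) = 0 := by
      intro σ
      apply hψ₂
      intro hmem
      apply hne
      rw [mem_zpowers_iff_mem_range_orderOf] at hmem
      obtain ⟨i, hi, hgi⟩ := Finset.mem_image.1 hmem
      refine ⟨(m+1) / Nat.gcd (m+1) i, Nat.gcd (m+1) i, ?_⟩
      calc fullCycleType τ = fullCycleType (σ⁻¹ * τ * σ) := (hconjfull σ τ).symm
        _ = fullCycleType (g ^ i) := by rw [hgi]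
        _ = _ := hfullpow i
    rw [Finset.sum_congr rfl (fun σ _ => hz σ)]
    simp
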